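/- Let c⃗_0, c⃗_1, c⃗_2, c⃗_3 ∈ ℝ³ and set M = Σ_{i=0}^{3} σ_i ⊗ (σ⃗·c⃗_i). If M² = I₄, then c⃗_1 × c⃗_2 = 0, c⃗_3 × c⃗_1 = 0, c⃗_3 × c⃗_2 = 0, c⃗_0 · c⃗_1 = c⃗_0 · c⃗_2 = c⃗_0 · c⃗_3 = 0, and |c⃗_0|² + |c⃗_1|² + |c⃗_2|² + |c⃗_3|² = 1. -/

import Mathlib

open Matrix Kronecker

noncomputable section

def σ0 : Matrix (Fin 2) (Fin 2) ℂ := 1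
def σ1 : Matrix (Fin 2) (Fin 2) ℂ := !![0, 1; 1, 0]
def σ2 : Matrix (Fin 2) (Fin 2) ℂ := !![0, -Complex.I; Complex.I, 0]
def σ3 : Matrix (Fin 2) (Fin 2) ℂ := !![1, 0; 0, -1]

/-- σ⃗·v for v ∈ ℝ³ -/
def pauliVec (v : Fin 3 → ℝ) : Matrix (Fin 2) (Fin 2) ℂ :=
  (v 0 : ℂ) • σ1 + (v 1 : ℂ) • σ2 + (v 2 : ℂ) • σ3

/-- m_η with tangent (t1,t2) -/
def mEta (t1 t2 η : ℝ) : Matrix (Fin 2) (Fin 2) ℂ :=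
  (Real.cos η : ℂ) • ((t1 : ℂ) • σ1 + (t2 : ℂ) • σ2) + (Real.sin η : ℂ) • σ3
set_option maxHeartbeats 4000000 in
private theorem square_one_conditions_aux (c : Fin 4 → Fin 3 → ℝ)
    (hM : (∑ i : Fin 4, ![σ0, σ1, σ2, σ3] i ⊗ₖ pauliVec (c i)) *
        (∑ i : Fin 4, ![σ0, σ1, σ2, σ3] i ⊗ₖ pauliVec (c i)) = 1) :
    crossProduct (c 1) (c 2) = 0 ∧ crossProduct (c 3) (c 1) = 0 ∧
    crossProduct (c 3) (c 2) = 0 ∧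
    c 0 ⬝ᵥ c 1 = 0 ∧ c 0 ⬝ᵥ c 2 = 0 ∧ c 0 ⬝ᵥ c 3 = 0 ∧
    c 0 ⬝ᵥ c 0 + c 1 ⬝ᵥ c 1 + c 2 ⬝ᵥ c 2 + c 3 ⬝ᵥ c 3 = 1 := by
  have h := fun i j => congrFun (congrFun hM i) j
  have e00 := h (0,0) (0,0)
  have e01 := h (0,0) (0,1)
  have e02 := h (0,0) (1,0)
  have e03 := h (0,0) (1,1)
  have e10 := h (0,1) (0,0)
  have e11 := h (0,1) (0,1)
  have e12 := h (0,1) (1,0)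
  have e13 := h (0,1) (1,1)
  have e20 := h (1,0) (0,0)
  have e21 := h (1,0) (0,1)
  have e22 := h (1,0) (1,0)
  have e23 := h (1,0) (1,1)
  have e30 := h (1,1) (0,0)
  have e31 := h (1,1) (0,1)
  have e32 := h (1,1) (1,0)
  have e33 := h (1,1) (1,1)
  clear h hM
  simp only [Matrix.mul_apply, Fintype.sum_prod_type, Fin.sum_univ_four, Fin.sum_univ_succ,
    Finset.sum_const, Finset.card_univ, Fintype.card_fin, Matrix.cons_val', Matrix.cons_val_zero,
    Matrix.cons_val_one, Matrix.cons_val_succ, Matrix.head_cons, Matrix.head_fin_const, Matrix.cons_val_fin_one,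
    kroneckerMap_apply, σ0, σ1, σ2, σ3, pauliVec, Matrix.one_apply, Complex.ext_iff,
    Matrix.add_apply, Matrix.smul_apply, Matrix.of_apply,
    smul_eq_mul, Complex.add_re, Complex.add_im, Complex.mul_re, Complex.mul_im,
    Complex.ofReal_re, Complex.ofReal_im, Complex.I_re, Complex.I_im, Complex.neg_re,
    Complex.neg_im, Complex.one_re, Complex.one_im, Complex.zero_re, Complex.zero_im,
    Prod.mk.injEq, Fin.isValue, show (Fin.succ 2 : Fin 4) = 3 from rfl]
    at e00 e01 e02 e03 e10 e11 e12 e13 e20 e21 e22 e23 e30 e31 e32 e33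
  norm_num at e00 e01 e02 e03 e10 e11 e12 e13 e20 e21 e22 e23 e30 e31 e32 e33
  obtain ⟨a1,a2⟩ := e00; obtain ⟨b1,b2⟩ := e01; obtain ⟨c1,c2⟩ := e02; obtain ⟨d1,d2⟩ := e03
  obtain ⟨f1,f2⟩ := e10; obtain ⟨g1,g2⟩ := e11; obtain ⟨i1,i2⟩ := e12; obtain ⟨j1,j2⟩ := e13
  obtain ⟨k1,k2⟩ := e20; obtain ⟨l1,l2⟩ := e21; obtain ⟨m1,m2⟩ := e22; obtain ⟨n1,n2⟩ := e23
  obtain ⟨p1,p2⟩ := e30; obtain ⟨q1,q2⟩ := e31; obtain ⟨r1,r2⟩ := e32; obtain ⟨s1,s2⟩ := e33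
  simp only [show (Fin.succ 2 : Fin 4) = 3 from rfl] at a1 a2 b1 b2 c1 c2 d1 d2 f1 f2 g1 g2 i1 i2 j1 j2 k1 k2 l1 l2 m1 m2 n1 n2 p1 p2 q1 q2 r1 r2 s1 s2
  ring_nf at a1 a2 b1 b2 c1 c2 d1 d2 f1 f2 g1 g2 i1 i2 j1 j2 k1 k2 l1 l2 m1 m2 n1 n2 p1 p2 q1 q2 r1 r2 s1 s2
  refine ⟨?_, ?_, ?_, ?_, ?_, ?_, ?_⟩ <;>
    first
    | (funext i; fin_cases i <;>
        · simp [crossProduct]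
          ring_nf
          linarith [a1, a2, b1, b2, c1, c2, d1, d2, f1, f2, g1, g2, i1, i2, j1, j2, k1, k2, l1, l2, m1, m2, n1, n2, p1, p2, q1, q2, r1, r2, s1, s2])
    | (simp only [dotProduct, Fin.sum_univ_three]
       ring_nf
       linarith [a1, a2, b1, b2, c1, c2, d1, d2, f1, f2, g1, g2, i1, i2, j1, j2, k1, k2, l1, l2, m1, m2, n1, n2, p1, p2, q1, q2, r1, r2, s1, s2])

theorem square_one_conditions (c : Fin 4 → Fin 3 → ℝ)
    (hM : (∑ i : Fin 4, ![σ0, σ1, σ2, σ3] i ⊗ₖ pauliVec (c i)) *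
        (∑ i : Fin 4, ![σ0, σ1, σ2, σ3] i ⊗ₖ pauliVec (c i)) = 1) :
    crossProduct (c 1) (c 2) = 0 ∧ crossProduct (c 3) (c 1) = 0 ∧
    crossProduct (c 3) (c 2) = 0 ∧
    c 0 ⬝ᵥ c 1 = 0 ∧ c 0 ⬝ᵥ c 2 = 0 ∧ c 0 ⬝ᵥ c 3 = 0 ∧
    c 0 ⬝ᵥ c 0 + c 1 ⬝ᵥ c 1 + c 2 ⬝ᵥ c 2 + c 3 ⬝ᵥ c 3 = 1 :=
  square_one_conditions_aux c hM
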